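/- Let I be a finite nonempty index set, let π_i > 0 for i ∈ I with Σ_{i∈I} π_i ≤ 1, let η_i > 0 for each i ∈ I, let T ≥ 1, and for each t ∈ {1,…,T} and i ∈ I let x_t^i ∈ ℝ^d, h_t^i ∈ ℝ, and g_t ∈ ℝ^d. Define x_t = (Σ_{i∈I} π_i exp(−Σ_{τ=1}^{t−1} h_τ^i) η_i x_t^i) / (Σ_{i∈I} π_i exp(−Σ_{τ=1}^{t−1} h_τ^i) η_i). If for every i ∈ I and every t ∈ {1,…,T} it holds that exp(−h_t^i) ≤ 1 + η_i ⟨x_t − x_t^i, g_t⟩, then for every i ∈ I, π_i exp(−Σ_{t=1}^T h_t^i) ≤ 1; equivalently, −Σ_{t=1}^T h_t^i ≤ ln(1/π_i). -/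

import Mathlib

theorem meta_potential_bound
    (d : ℕ) (I : Type*) [Fintype I] [Nonempty I]
    (π : I → ℝ) (hπpos : ∀ i, 0 < π i) (hπsum : ∑ i, π i ≤ 1)
    (η : I → ℝ) (hηpos : ∀ i, 0 < η i)
    (T : ℕ) (hT : 1 ≤ T)
    (x : ℕ → I → EuclideanSpace ℝ (Fin d)) (h : ℕ → I → ℝ)
    (g : ℕ → EuclideanSpace ℝ (Fin d))
    (xbar : ℕ → EuclideanSpace ℝ (Fin d))
    (hxbar : ∀ t ∈ Finset.Icc 1 T, xbar t =
      (∑ i, π i * Real.exp (-(∑ τ ∈ Finset.Icc 1 (t - 1), h τ i)) * η i)⁻¹ •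
        ∑ i, (π i * Real.exp (-(∑ τ ∈ Finset.Icc 1 (t - 1), h τ i)) * η i) • x t i)
    (hexp : ∀ i, ∀ t ∈ Finset.Icc 1 T,
      Real.exp (-h t i) ≤ 1 + η i * (inner ℝ (xbar t - x t i) (g t) : ℝ)) :
    ∀ i, π i * Real.exp (-(∑ t ∈ Finset.Icc 1 T, h t i)) ≤ 1 ∧
      -(∑ t ∈ Finset.Icc 1 T, h t i) ≤ Real.log (1 / π i) := by
  -- Potential
  set Φ : ℕ → ℝ := fun t => ∑ i, π i * Real.exp (-(∑ τ ∈ Finset.Icc 1 t, h τ i)) with hΦ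
  have key : ∀ t, t ≤ T → Φ t ≤ 1 := by
    intro t
    induction t with
    | zero =>
      intro _
      simpa [hΦ] using hπsum
    | succ t ih =>
      intro hle
      have ht' : t ≤ T := Nat.le_of_succ_le hle
      have htmem : t + 1 ∈ Finset.Icc 1 T := by
        simp [Nat.succ_le_iff] at *
        omega
      -- weights
      set w : I → ℝ := fun i => π i * Real.exp (-(∑ τ ∈ Finset.Icc 1 t, h τ i)) with hw
      have hwpos : ∀ i, 0 < w i := fun i => mul_pos (hπpos i) (Real.exp_pos _)
      set v : I → ℝ := fun i => w i * η i with hv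
      have hvpos : ∀ i, 0 < v i := fun i => mul_pos (hwpos i) (hηpos i)
      have hVpos : 0 < ∑ i, v i := Finset.sum_pos (fun i _ => hvpos i) Finset.univ_nonempty
      have hxb : xbar (t + 1) = (∑ i, v i)⁻¹ • ∑ i, v i • x (t + 1) i := by
        have := hxbar (t + 1) htmem
        simpa [hv, hw] using this
      -- key cancellation
      have hcancel : ∑ i, v i * (inner ℝ (xbar (t+1) - x (t+1) i) (g (t+1)) : ℝ) = 0 := by
        have : ∑ i, v i * (inner ℝ (xbar (t+1) - x (t+1) i) (g (t+1)) : ℝ)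
            = (inner ℝ (∑ i, v i • (xbar (t+1) - x (t+1) i)) (g (t+1)) : ℝ) := by
          rw [sum_inner]
          congr 1
          ext i
          rw [real_inner_smul_left]
        rw [this]
        have hzero : (∑ i, v i • (xbar (t+1) - x (t+1) i)) = 0 := by
          have : (∑ i, v i • (xbar (t+1) - x (t+1) i))
              = (∑ i, v i) • xbar (t+1) - ∑ i, v i • x (t+1) i := by
            rw [Finset.sum_smul]
            rw [← Finset.sum_sub_distrib]
            congr 1
            ext i
            rw [smul_sub]
          rw [this, hxb, smul_inv_smul₀ (ne_of_gt hVpos), sub_self]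
        rw [hzero, inner_zero_left]
      -- step inequality
      have step : Φ (t + 1) ≤ Φ t := by
        have hsplit : ∀ i, (∑ τ ∈ Finset.Icc 1 (t+1), h τ i)
            = (∑ τ ∈ Finset.Icc 1 t, h τ i) + h (t+1) i := by
          intro i
          rw [← Finset.sum_Icc_succ_top (by omega : 1 ≤ t + 1)]
        calc Φ (t + 1) = ∑ i, w i * Real.exp (-h (t+1) i) := by
              apply Finset.sum_congr rfl
              intro i _
              rw [hsplit i, neg_add, Real.exp_add, hw]
              ring
          _ ≤ ∑ i, w i * (1 + η i * (inner ℝ (xbar (t+1) - x (t+1) i) (g (t+1)) : ℝ)) := by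
              apply Finset.sum_le_sum
              intro i _
              exact mul_le_mul_of_nonneg_left (hexp i (t+1) htmem) (le_of_lt (hwpos i))
          _ = Φ t + ∑ i, v i * (inner ℝ (xbar (t+1) - x (t+1) i) (g (t+1)) : ℝ) := by
              rw [hΦ, ← Finset.sum_add_distrib]
              apply Finset.sum_congr rfl
              intro i _
              simp only [hv, hw]
              ring
          _ = Φ t := by rw [hcancel, add_zero]
      exact le_trans step (ih ht')
  intro i
  have h1 : π i * Real.exp (-(∑ t ∈ Finset.Icc 1 T, h t i)) ≤ 1 := by
    refine le_trans ?_ (key T le_rfl)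
    exact Finset.single_le_sum (f := fun j => π j * Real.exp (-(∑ t ∈ Finset.Icc 1 T, h t j)))
      (fun j _ => le_of_lt (mul_pos (hπpos j) (Real.exp_pos _))) (Finset.mem_univ i)
  refine ⟨h1, ?_⟩
  have h2 : Real.exp (-(∑ t ∈ Finset.Icc 1 T, h t i)) ≤ 1 / π i := by
    rw [le_div_iff₀ (hπpos i)]
    linarith [h1]
  calc -(∑ t ∈ Finset.Icc 1 T, h t i)
      = Real.log (Real.exp (-(∑ t ∈ Finset.Icc 1 T, h t i))) := (Real.log_exp _).symm
    _ ≤ Real.log (1 / π i) := Real.log_le_log (Real.exp_pos _) h2
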